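/- If g ∈ L²(ℝⁿ, ℂ) has compact support, then its Fourier transform f(z) = ∫_{ℝⁿ} g(x)·exp(i⟨x,z⟩) dx extends to an entire function on ℂⁿ. -/

import Mathlib

open MeasureTheory Metric

set_option maxHeartbeats 1000000 in
set_option synthInstance.maxHeartbeats 400000 in
/-- Paley–Wiener type statement: the Fourier transform of a compactly supported
`L²` function on `ℝⁿ` extends to an entire function on `ℂⁿ`. -/
theorem fourier_compact_support_entire (n : ℕ) (g : (Fin n → ℝ) → ℂ)
    (hg : MemLp g 2) (c : ℝ)
    (hsupp : ∀ᵐ x : Fin n → ℝ, x ∉ Set.Icc (fun _ => -c) (fun _ => c) → g x = 0) :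
    ∃ F : (Fin n → ℂ) → ℂ, Differentiable ℂ F ∧
      ∀ z : Fin n → ℝ, F (fun i => (z i : ℂ))
        = ∫ x, g x * Complex.exp (Complex.I * ((∑ i, x i * z i : ℝ) : ℂ)) := by
  classical
  set s : Set (Fin n → ℝ) := Set.Icc (fun _ => -c) (fun _ => c) with hs_def
  set g' : (Fin n → ℝ) → ℂ := s.indicator g with hg'_def
  have hg'_ae : g' =ᵐ[volume] g := by
    filter_upwards [hsupp] with x hx
    by_cases h : x ∈ s
    · simp [hg'_def, h]
    · simp [hg'_def, h, hx h]
  have hg' : MemLp g' 2 := hg.ae_eq hg'_ae.symm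
  have hzero : ∀ x, x ∉ s → g' x = 0 := fun x hx => Set.indicator_of_notMem hx _
  have hμs : volume s ≠ ⊤ := (isCompact_Icc.measure_lt_top).ne
  have hint : Integrable g' := by
    rw [← memLp_one_iff_integrable]
    exact hg'.mono_exponent_of_measure_support_ne_top hzero hμs (by norm_num)
  -- the continuous linear map `z ↦ ∑ i, x i * z i`
  set L : (Fin n → ℝ) → ((Fin n → ℂ) →L[ℂ] ℂ) :=
    fun a => ∑ i, (a i : ℂ) • (ContinuousLinearMap.proj i) with hL_def
  have hL : ∀ a z, L a z = ∑ i, (a i : ℂ) * z i := by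
    intro a z
    simp [hL_def, ContinuousLinearMap.sum_apply, smul_eq_mul]
  have hLcont : Continuous L := by
    apply continuous_finset_sum
    intro i _
    exact (Complex.continuous_ofReal.comp (continuous_apply i)).smul continuous_const
  set K : ℝ := n * |c| with hK_def
  have hK0 : 0 ≤ K := by positivity
  have hLnorm : ∀ a ∈ s, ‖L a‖ ≤ K := by
    intro a ha
    have habs : ∀ i, |a i| ≤ |c| := by
      intro i
      have h1 : -c ≤ a i := ha.1 i
      have h2 : a i ≤ c := ha.2 i
      rw [abs_le]
      constructor
      · linarith [le_abs_self c]
      · linarith [le_abs_self c]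
    apply ContinuousLinearMap.opNorm_le_bound _ hK0
    intro z
    rw [hL]
    calc ‖∑ i, (a i : ℂ) * z i‖ ≤ ∑ i, ‖(a i : ℂ) * z i‖ := norm_sum_le _ _
      _ ≤ ∑ _i : Fin n, |c| * ‖z‖ := by
          apply Finset.sum_le_sum
          intro i _
          rw [norm_mul, Complex.norm_real, Real.norm_eq_abs]
          exact mul_le_mul (habs i) (norm_le_pi_norm z i) (norm_nonneg _) (abs_nonneg _)
      _ = K * ‖z‖ := by simp [hK_def]; ring
  have hexp_bound : ∀ a ∈ s, ∀ z : Fin n → ℂ, ‖Complex.exp (Complex.I * L a z)‖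
      ≤ Real.exp (K * ‖z‖) := by
    intro a ha z
    rw [Complex.norm_exp]
    apply Real.exp_le_exp.2
    calc (Complex.I * L a z).re ≤ ‖Complex.I * L a z‖ := Complex.re_le_norm _
      _ = ‖L a z‖ := by rw [norm_mul]; simp
      _ ≤ ‖L a‖ * ‖z‖ := (L a).le_opNorm z
      _ ≤ K * ‖z‖ := mul_le_mul_of_nonneg_right (hLnorm a ha) (norm_nonneg _)
  set F : (Fin n → ℂ) → ℂ := fun z => ∫ x, g' x * Complex.exp (Complex.I * L x z) with hF_def
  have hcontz : ∀ z : Fin n → ℂ, Continuous fun a => Complex.exp (Complex.I * L a z) :=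
    fun z => Complex.continuous_exp.comp (continuous_const.mul
      ((ContinuousLinearMap.apply ℂ ℂ z).continuous.comp hLcont))
  have hF_meas : ∀ z : Fin n → ℂ,
      AEStronglyMeasurable (fun a => g' a * Complex.exp (Complex.I * L a z)) volume :=
    fun z => hg'.aestronglyMeasurable.mul (hcontz z).aestronglyMeasurable
  have hF_int : ∀ z : Fin n → ℂ,
      Integrable (fun a => g' a * Complex.exp (Complex.I * L a z)) := by
    intro z
    apply Integrable.mono' (hint.norm.mul_const (Real.exp (K * ‖z‖))) (hF_meas z)
    apply Filter.Eventually.of_forall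
    intro a
    by_cases ha : a ∈ s
    · rw [norm_mul]
      exact mul_le_mul_of_nonneg_left (hexp_bound a ha z) (norm_nonneg _)
    · simp [hzero a ha, mul_nonneg (norm_nonneg (g' a)) (Real.exp_nonneg _)]
  have hdiff : ∀ z₀ : Fin n → ℂ, HasFDerivAt F
      (∫ a, (g' a * Complex.exp (Complex.I * L a z₀) * Complex.I) • L a) z₀ := by
    intro z₀
    apply hasFDerivAt_integral_of_dominated_of_fderiv_le
      (F' := fun z a => (g' a * Complex.exp (Complex.I * L a z) * Complex.I) • L a)
      (bound := fun a => ‖g' a‖ * (Real.exp (K * (‖z₀‖ + 1)) * K)) (ball_mem_nhds z₀ one_pos)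
    · exact Filter.Eventually.of_forall fun z => hF_meas z
    · exact hF_int z₀
    · exact ((hF_meas z₀).mul aestronglyMeasurable_const).smul hLcont.aestronglyMeasurable
    · apply Filter.Eventually.of_forall
      intro a z hz
      by_cases ha : a ∈ s
      · refine (norm_smul_le (g' a * Complex.exp (Complex.I * L a z) * Complex.I) (L a)).trans ?_
        rw [norm_mul, norm_mul]
        have hz' : ‖z‖ ≤ ‖z₀‖ + 1 := by
          have := mem_ball_iff_norm.1 hz
          calc ‖z‖ = ‖z₀ + (z - z₀)‖ := by ring_nf
            _ ≤ ‖z₀‖ + ‖z - z₀‖ := norm_add_le _ _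
            _ ≤ ‖z₀‖ + 1 := by linarith
        have he : ‖Complex.exp (Complex.I * L a z)‖ ≤ Real.exp (K * (‖z₀‖ + 1)) :=
          (hexp_bound a ha z).trans (Real.exp_le_exp.2
            (mul_le_mul_of_nonneg_left hz' hK0))
        simp only [Complex.norm_I, mul_one]
        calc ‖g' a‖ * ‖Complex.exp (Complex.I * L a z)‖ * ‖L a‖
            ≤ ‖g' a‖ * Real.exp (K * (‖z₀‖ + 1)) * K := by
              have h0 : (0:ℝ) ≤ ‖g' a‖ * Real.exp (K * (‖z₀‖ + 1)) := by positivity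
              exact mul_le_mul (mul_le_mul_of_nonneg_left he (norm_nonneg _))
                (hLnorm a ha) (norm_nonneg _) h0
          _ = ‖g' a‖ * (Real.exp (K * (‖z₀‖ + 1)) * K) := by ring
      · simp [hzero a ha]
    · exact (hint.norm.mul_const _)
    · apply Filter.Eventually.of_forall
      intro a z _
      have h1 : HasFDerivAt (fun z => Complex.I * L a z) (Complex.I • L a) z :=
        (L a).hasFDerivAt.const_mul Complex.I
      have h2 := h1.cexp
      have h3 := h2.const_mul (g' a)
      simpa [smul_smul, mul_assoc] using h3
  refine ⟨F, fun z₀ => (hdiff z₀).differentiableAt, ?_⟩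
  intro z
  rw [hF_def]
  apply integral_congr_ae
  filter_upwards [hg'_ae] with x hx
  rw [hx, hL]
  congr 2
  push_cast
  ring
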